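/- Let r > 0 and let (K_n) be a sequence of nonempty compact subsets of ℝ^d, each having the uniform interior ball property of radius r, i.e. for every x ∈ K_n there exists y with dist(x, y) ≤ r and closedBall(y, r) ⊆ K_n. If K_n converges to a nonempty compact set K in the Hausdorff distance, then K also has the uniform interior ball property of radius r. -/

import Mathlib

open Metric Filter Set
open scoped Topology

/-- The uniform interior ball property of radius `r` is stable under Hausdorff
convergence of nonempty compact sets. -/
theorem uniform_interior_ball_hausdorff_stable (d : ℕ) (r : ℝ) (hr : 0 < r)
    (K : ℕ → Set (EuclideanSpace ℝ (Fin d))) (hKne : ∀ n, (K n).Nonempty)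
    (hKc : ∀ n, IsCompact (K n))
    (hUIB : ∀ n, ∀ x ∈ K n, ∃ y : EuclideanSpace ℝ (Fin d),
      dist x y ≤ r ∧ Metric.closedBall y r ⊆ K n)
    (L : Set (EuclideanSpace ℝ (Fin d))) (hLne : L.Nonempty) (hLc : IsCompact L)
    (hconv : Filter.Tendsto (fun n => Metric.hausdorffDist (K n) L) Filter.atTop (𝓝 0)) :
    ∀ x ∈ L, ∃ y : EuclideanSpace ℝ (Fin d), dist x y ≤ r ∧ Metric.closedBall y r ⊆ L := by
  intro x hx
  have hne : ∀ n, EMetric.hausdorffEdist (K n) L ≠ ⊤ := fun n =>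
    Metric.hausdorffEdist_ne_top_of_nonempty_of_bounded (hKne n) hLne (hKc n).isBounded
      hLc.isBounded
  set hd : ℕ → ℝ := fun n => Metric.hausdorffDist (K n) L with hhd
  -- choose nearby points in K n
  have hx' : ∀ n, ∃ p ∈ K n, dist x p ≤ hd n := by
    intro n
    obtain ⟨p, hp, hpd⟩ := (hKc n).exists_infDist_eq_dist (hKne n) x
    refine ⟨p, hp, ?_⟩
    rw [← hpd]
    have := Metric.infDist_le_hausdorffDist_of_mem hx
      (by rw [EMetric.hausdorffEdist_comm]; exact hne n)
    rwa [Metric.hausdorffDist_comm] at this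
  choose p hp hpd using hx'
  choose y hyd hysub using fun n => hUIB n (p n) (hp n)
  -- bound hd
  obtain ⟨C, hC⟩ := hconv.bddAbove_range
  have hCb : ∀ n, hd n ≤ C := fun n => hC (Set.mem_range_self n)
  have hdb : ∀ n, dist x (y n) ≤ hd n + r := fun n =>
    (dist_triangle x (p n) (y n)).trans (add_le_add (hpd n) (hyd n))
  have hyb : ∀ n, y n ∈ Metric.closedBall x (C + r) := fun n => by
    rw [Metric.mem_closedBall, dist_comm]
    exact (hdb n).trans (add_le_add_left (hCb n) r)
  obtain ⟨y₀, -, φ, hφ, hlim⟩ :=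
    (isCompact_closedBall x (C + r)).tendsto_subseq hyb
  have hdφ : Filter.Tendsto (fun n => hd (φ n)) Filter.atTop (𝓝 0) :=
    hconv.comp hφ.tendsto_atTop
  refine ⟨y₀, ?_, ?_⟩
  · -- dist x y₀ ≤ r
    have h1 : Filter.Tendsto (fun n => dist x (y (φ n))) Filter.atTop (𝓝 (dist x y₀)) :=
      (tendsto_const_nhds : Filter.Tendsto _ _ (𝓝 x)).dist hlim
    have h3 : Filter.Tendsto (fun n => hd (φ n) + r) Filter.atTop (𝓝 (0 + r)) :=
      hdφ.add tendsto_const_nhds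
    have := le_of_tendsto_of_tendsto' h1 h3 (fun n => hdb (φ n))
    linarith
  · intro z hz
    rw [Metric.mem_closedBall] at hz
    -- z_n := z + (y (φ n) - y₀) ∈ K (φ n)
    have hzn : ∀ n, z + (y (φ n) - y₀) ∈ K (φ n) := by
      intro n
      apply hysub (φ n)
      rw [Metric.mem_closedBall, dist_eq_norm]
      have : z + (y (φ n) - y₀) - y (φ n) = z - y₀ := by abel
      rw [this, ← dist_eq_norm]
      exact hz
    have hbound : ∀ n, Metric.infDist z L ≤ hd (φ n) + dist y₀ (y (φ n)) := by
      intro n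
      calc Metric.infDist z L
          ≤ Metric.infDist (z + (y (φ n) - y₀)) L + dist z (z + (y (φ n) - y₀)) :=
            Metric.infDist_le_infDist_add_dist
        _ ≤ hd (φ n) + dist y₀ (y (φ n)) := by
            refine add_le_add ?_ ?_
            · exact Metric.infDist_le_hausdorffDist_of_mem (hzn n) (hne (φ n))
            · rw [dist_eq_norm]
              have : z - (z + (y (φ n) - y₀)) = y₀ - y (φ n) := by abel
              rw [this, ← dist_eq_norm]
    have htend : Filter.Tendsto (fun n => hd (φ n) + dist y₀ (y (φ n)))
        Filter.atTop (𝓝 (0 + 0)) := by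
      refine Filter.Tendsto.add hdφ ?_
      have := (tendsto_const_nhds : Filter.Tendsto _ _ (𝓝 y₀)).dist hlim
      simpa using this
    have hle : Metric.infDist z L ≤ 0 := by
      have := ge_of_tendsto' htend (fun n => hbound n)
      linarith
    have h0 : Metric.infDist z L = 0 := le_antisymm hle Metric.infDist_nonneg
    exact (hLc.isClosed.mem_iff_infDist_zero hLne).2 h0
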